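/- Let d_1, ..., d_n be nonzero vectors in R^2 such that the angle between any pair of them is at most θ, where 0 ≤ θ ≤ π/2. Then (Σ_{i=1}^n |d_i|) / |Σ_{i=1}^n d_i| ≤ sec(θ/2). -/

import Mathlib

lemma re_conj_mul (z w : ℂ) :
    ((starRingEnd ℂ) z * w).re = ‖z‖ * ‖w‖ * Real.cos (w.arg - z.arg) := by
  rcases eq_or_ne z 0 with rfl | hz
  · simp
  rcases eq_or_ne w 0 with rfl | hw
  · simp
  have hz' : ‖z‖ ≠ 0 := by simpa using hz
  have hw' : ‖w‖ ≠ 0 := by simpa using hw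
  rw [Real.cos_sub, Complex.cos_arg hz, Complex.cos_arg hw, Complex.sin_arg, Complex.sin_arg]
  field_simp
  rw [Complex.mul_re, Complex.conj_re, Complex.conj_im]
  ring

lemma abs_le_of_cos_ge {x θ : ℝ} (hx : |x| ≤ Real.pi) (hθ0 : 0 ≤ θ) (hθ : θ ≤ Real.pi)
    (h : Real.cos θ ≤ Real.cos x) : |x| ≤ θ := by
  have h1 : |x| = Real.arccos (Real.cos x) := by
    rw [← Real.cos_abs, Real.arccos_cos (abs_nonneg x) hx]
  rw [h1, ← Real.arccos_cos hθ0 hθ]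
  exact Real.strictAntiOn_arccos.antitoneOn
    ⟨Real.neg_one_le_cos _, Real.cos_le_one _⟩ ⟨Real.neg_one_le_cos _, Real.cos_le_one _⟩ h

lemma re_mul_exp (z : ℂ) (φ : ℝ) :
    (z * Complex.exp (-(φ:ℂ) * Complex.I)).re = ‖z‖ * Real.cos (z.arg - φ) := by
  conv_lhs => rw [← Complex.norm_mul_exp_arg_mul_I z]
  rw [mul_assoc, ← Complex.exp_add]
  have h : (z.arg : ℂ) * Complex.I + -(φ:ℂ) * Complex.I = ((z.arg - φ : ℝ) : ℂ) * Complex.I := by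
    push_cast; ring
  rw [h, Complex.exp_mul_I]
  simp only [← Complex.ofReal_cos, ← Complex.ofReal_sin, Complex.mul_re, Complex.add_re,
    Complex.add_im, Complex.ofReal_re, Complex.ofReal_im, Complex.mul_I_re, Complex.mul_I_im,
    Complex.I_re, Complex.I_im]
  ring

lemma core (n : ℕ) (hn : 0 < n) (θ : ℝ) (hθ0 : 0 ≤ θ) (hθ : θ ≤ Real.pi / 2)
    (c : Fin n → ℂ) (hc : ∀ i, c i ≠ 0)
    (h : ∀ i j, ‖c i‖ * ‖c j‖ * Real.cos θ ≤
      ((starRingEnd ℂ) (c i) * c j).re) :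
    Real.cos (θ / 2) * ∑ i, ‖c i‖ ≤ ‖∑ i, c i‖ := by
  have hpi := Real.pi_pos
  set i0 : Fin n := ⟨0, hn⟩ with hi0
  set e : Fin n → ℂ := fun i => c i / c i0 with he
  have he0 : e i0 = 1 := div_self (hc i0)
  have hene : ∀ i, e i ≠ 0 := fun i => div_ne_zero (hc i) (hc i0)
  set a : Fin n → ℝ := fun i => (e i).arg with ha
  have habs : ∀ i, ‖e i‖ = ‖c i‖ / ‖c i0‖ := by
    intro i; simp [he, map_div₀]
  have hc0pos : 0 < ‖c i0‖ := by simpa using hc i0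
  -- pairwise cosine bound
  have hkey : ∀ i j, Real.cos θ ≤ Real.cos (a j - a i) := by
    intro i j
    have hconj : (starRingEnd ℂ) (e i) * e j
        = ((starRingEnd ℂ) (c i) * c j) / (((‖c i0‖)^2 : ℝ) : ℂ) := by
      rw [he]
      simp only [map_div₀]
      rw [div_mul_div_comm]
      congr 1
      rw [← Complex.normSq_eq_conj_mul_self, Complex.normSq_eq_norm_sq]
    have h2 : ‖e i‖ * ‖e j‖ * Real.cos θ ≤
        ((starRingEnd ℂ) (e i) * e j).re := by
      rw [hconj, Complex.div_ofReal_re, habs, habs]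
      rw [div_mul_div_comm, div_mul_eq_mul_div, ← sq]
      gcongr
      exact h i j
    rw [re_conj_mul] at h2
    have hprod : 0 < ‖e i‖ * ‖e j‖ :=
      mul_pos (norm_pos_iff.mpr (hene i)) (norm_pos_iff.mpr (hene j))
    exact le_of_mul_le_mul_left h2 hprod
  have hθpi : θ ≤ Real.pi := by linarith
  -- |a i| ≤ θ
  have haθ : ∀ i, |a i| ≤ θ := by
    intro i
    have := hkey i0 i
    rw [show a i0 = 0 by simp [ha, he0]] at this
    simp only [sub_zero] at this
    exact abs_le_of_cos_ge (Complex.abs_arg_le_pi _) hθ0 hθpi this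
  have hpair : ∀ i j, |a i - a j| ≤ θ := by
    intro i j
    have h1 : |a i - a j| ≤ Real.pi := by
      have := haθ i; have := haθ j
      have := abs_sub (a i) (a j)
      calc |a i - a j| ≤ |a i| + |a j| := abs_sub _ _
        _ ≤ Real.pi := by linarith
    have := hkey j i
    exact abs_le_of_cos_ge h1 hθ0 hθpi this
  -- bisector
  have hne : (Finset.univ : Finset (Fin n)).Nonempty := ⟨i0, Finset.mem_univ _⟩
  set M : ℝ := Finset.univ.sup' hne a with hM
  set m : ℝ := Finset.univ.inf' hne a with hm
  have hMm : M - m ≤ θ := by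
    obtain ⟨i, -, hi⟩ := Finset.exists_mem_eq_sup' hne a
    obtain ⟨j, -, hj⟩ := Finset.exists_mem_eq_inf' hne a
    rw [hM, hm, hi, hj]
    calc a i - a j ≤ |a i - a j| := le_abs_self _
      _ ≤ θ := hpair i j
  set φ : ℝ := (m + M) / 2 with hφ
  have hbound : ∀ i, |a i - φ| ≤ θ / 2 := by
    intro i
    have h1 : a i ≤ M := Finset.le_sup' a (Finset.mem_univ i)
    have h2 : m ≤ a i := Finset.inf'_le a (Finset.mem_univ i)
    rw [abs_le]; constructor <;> [skip; skip] <;> simp only [hφ] <;> linarith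
  -- per-term bound
  have hterm : ∀ i, Real.cos (θ/2) * ‖e i‖ ≤
      (e i * Complex.exp (-(φ:ℂ) * Complex.I)).re := by
    intro i
    rw [re_mul_exp]
    rw [mul_comm (Real.cos (θ/2))]
    apply mul_le_mul_of_nonneg_left ?_ (norm_nonneg _)
    rw [← Real.cos_abs (a i - φ)]
    apply Real.cos_le_cos_of_nonneg_of_le_pi (abs_nonneg _) (by linarith)
    exact hbound i
  -- sum up
  have hsum : Real.cos (θ/2) * ∑ i, ‖e i‖ ≤ ‖∑ i, e i‖ := by
    calc Real.cos (θ/2) * ∑ i, ‖e i‖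
        = ∑ i, Real.cos (θ/2) * ‖e i‖ := by rw [Finset.mul_sum]
      _ ≤ ∑ i, (e i * Complex.exp (-(φ:ℂ) * Complex.I)).re := Finset.sum_le_sum fun i _ => hterm i
      _ = ((∑ i, e i) * Complex.exp (-(φ:ℂ) * Complex.I)).re := by
          rw [Finset.sum_mul, Complex.re_sum]
      _ ≤ ‖(∑ i, e i) * Complex.exp (-(φ:ℂ) * Complex.I)‖ := Complex.re_le_norm _
      _ = ‖∑ i, e i‖ := by
          rw [norm_mul]
          rw [show (-(φ:ℂ) * Complex.I) = ((-φ : ℝ) : ℂ) * Complex.I by push_cast; ring]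
          rw [Complex.norm_exp_ofReal_mul_I, mul_one]
  -- translate back
  have hse : (∑ i, e i) = (∑ i, c i) / c i0 := by rw [he, ← Finset.sum_div]
  rw [hse, norm_div] at hsum
  have h2 : ∑ i, ‖e i‖ = (∑ i, ‖c i‖) / ‖c i0‖ := by
    simp_rw [habs]; rw [Finset.sum_div]
  rw [h2, ← mul_div_assoc] at hsum
  exact (div_le_div_iff_of_pos_right hc0pos).mp hsum

theorem secant_bound (n : ℕ) (θ : ℝ) (hθ0 : 0 ≤ θ) (hθ : θ ≤ Real.pi / 2)
    (d : Fin n → EuclideanSpace ℝ (Fin 2))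
    (hne : ∀ i, d i ≠ 0)
    (hang : ∀ i j, InnerProductGeometry.angle (d i) (d j) ≤ θ) :
    (∑ i, ‖d i‖) / ‖∑ i, d i‖ ≤ 1 / Real.cos (θ / 2) := by
  have hpi := Real.pi_pos
  have hcos : 0 < Real.cos (θ / 2) :=
    Real.cos_pos_of_mem_Ioo ⟨by linarith, by linarith⟩
  rcases Nat.eq_zero_or_pos n with rfl | hn
  · simp
    positivity
  set c : Fin n → ℂ := fun i => ⟨d i 0, d i 1⟩ with hcdef
  have habs : ∀ v : EuclideanSpace ℝ (Fin 2), ‖(⟨v 0, v 1⟩ : ℂ)‖ = ‖v‖ := by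
    intro v
    rw [EuclideanSpace.norm_eq, Complex.norm_def, Complex.normSq_mk]
    simp [Fin.sum_univ_two, Real.norm_eq_abs, sq_abs, sq]
  have habs' : ∀ i, ‖c i‖ = ‖d i‖ := fun i => habs (d i)
  have hcne : ∀ i, c i ≠ 0 := by
    intro i hzero
    apply hne i
    have := habs' i
    rw [hzero] at this
    simp at this
    exact (norm_eq_zero.mp this.symm)
  have hinner : ∀ i j, ((starRingEnd ℂ) (c i) * c j).re = inner ℝ (d i) (d j) := by
    intro i j
    simp [hcdef, Complex.mul_re, PiLp.inner_apply, RCLike.inner_apply, Fin.sum_univ_two]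
    try ring
  have hθpi : θ ≤ Real.pi := by linarith
  have hsumc : ∑ i, c i = (⟨(∑ i, d i) 0, (∑ i, d i) 1⟩ : ℂ) := by
    apply Complex.ext <;>
      · simp only [hcdef, Complex.re_sum, Complex.im_sum]
        rw [WithLp.ofLp_sum]; exact (Finset.sum_apply _ _ _).symm
  have hkey := core n hn θ hθ0 hθ c hcne (by
    intro i j
    rw [hinner, habs', habs']
    have h1 : Real.cos θ ≤ Real.cos (InnerProductGeometry.angle (d i) (d j)) :=
      Real.cos_le_cos_of_nonneg_of_le_pi (InnerProductGeometry.angle_nonneg _ _) hθpi (hang i j)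
    have h2 := InnerProductGeometry.cos_angle (d i) (d j)
    have hnorm : 0 < ‖d i‖ * ‖d j‖ :=
      mul_pos (norm_pos_iff.mpr (hne i)) (norm_pos_iff.mpr (hne j))
    have h3 : inner ℝ (d i) (d j) = Real.cos (InnerProductGeometry.angle (d i) (d j)) *
        (‖d i‖ * ‖d j‖) := by
      rw [h2, div_mul_cancel₀ _ hnorm.ne']
    rw [h3]
    calc ‖d i‖ * ‖d j‖ * Real.cos θ = Real.cos θ * (‖d i‖ * ‖d j‖) := by ring
      _ ≤ _ := by gcongr)
  rw [hsumc, habs (∑ i, d i)] at hkey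
  simp_rw [habs'] at hkey
  have hsumpos : 0 < ∑ i, ‖d i‖ := by
    apply Finset.sum_pos (fun i _ => norm_pos_iff.mpr (hne i)) ⟨⟨0, hn⟩, Finset.mem_univ _⟩
  have hnormpos : 0 < ‖∑ i, d i‖ := by nlinarith
  rw [div_le_div_iff₀ hnormpos hcos]
  nlinarith
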